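/- Let p ≥ 1 and k ≥ 1 be integers and let F(p, k) be the fork tree consisting of a root whose children are p·k leaves, in the pebble-game model. Then the minimum makespan of F(p, k) over all schedules on p processors equals k + 1. Moreover, (p(k − 1) + 2)/(k + 1) → p as k → ∞; since the ParSubtrees heuristic achieves makespan p(k − 1) + 2 on F(p, k), ParSubtrees is at best a p-approximation for makespan minimization. -/

import Mathlib

/-- A finite rooted in-tree: every node has a parent (the root is its own
parent), and a rank function witnesses that following parents strictly
decreases towards the root, so every node has a unique path to the root. -/
structure InTree where
  V : Type
  [fin : Fintype V]
  [deq : DecidableEq V]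
  root : V
  parent : V → V
  parent_root : parent root = root
  rk : V → ℕ
  rk_lt : ∀ v, v ≠ root → rk (parent v) < rk v
  rk_root : ∀ v, rk v = 0 → v = root

attribute [instance] InTree.fin InTree.deq

/-- A schedule of `T` on `p` processors: at most `p` tasks per unit time step,
and every non-root task finishes before its parent starts. -/
def InTree.IsSchedule (T : InTree) (p : ℕ) (t : T.V → ℕ) : Prop :=
  (∀ s : ℕ, (Finset.univ.filter (fun i => t i = s)).card ≤ p) ∧
  (∀ i : T.V, i ≠ T.root → t i + 1 ≤ t (T.parent i))

/-- Makespan of a schedule: `max_i (t i + 1)`. -/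
def InTree.makespan (T : InTree) (t : T.V → ℕ) : ℕ :=
  Finset.univ.sup (fun i => t i + 1)

/-- Memory used at step `s`: number of nodes `i` with `t i ≤ s` that are the
root or whose parent has not finished before step `s`. -/
def InTree.memAt (T : InTree) (t : T.V → ℕ) (s : ℕ) : ℕ :=
  (Finset.univ.filter (fun i : T.V => t i ≤ s ∧ (i = T.root ∨ s ≤ t (T.parent i)))).card

/-- Peak memory of a schedule: maximum memory usage over steps `0 ≤ s < makespan`. -/
def InTree.peakMemory (T : InTree) (t : T.V → ℕ) : ℕ :=
  (Finset.range (T.makespan t)).sup (T.memAt t)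


/-- The fork tree `F` with `N` leaves: a root whose children are `N` leaves. -/
def forkTree (N : ℕ) : InTree where
  V := Unit ⊕ Fin N
  root := Sum.inl ()
  parent := fun _ => Sum.inl ()
  parent_root := rfl
  rk := fun v => match v with
    | Sum.inl _ => 0
    | Sum.inr _ => 1
  rk_lt := by rintro (u | i) h
              · cases u; exact absurd rfl h
              · simp
  rk_root := by rintro (u | i) h
                · cases u; rfl
                · simp at h

/-- Counting lemma: at most `p*n` tasks are started before step `n`. -/
lemma count_lt (T : InTree) (p : ℕ) (t : T.V → ℕ)
    (h : ∀ s : ℕ, (Finset.univ.filter (fun i => t i = s)).card ≤ p) (n : ℕ) :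
    (Finset.univ.filter (fun i => t i < n)).card ≤ p * n := by
  have hsub : (Finset.univ.filter (fun i => t i < n)) ⊆
      (Finset.range n).biUnion (fun s => Finset.univ.filter (fun i => t i = s)) := by
    intro x hx
    simp only [Finset.mem_filter, Finset.mem_univ, true_and] at hx
    simp only [Finset.mem_biUnion, Finset.mem_range, Finset.mem_filter, Finset.mem_univ,
      true_and]
    exact ⟨t x, hx, rfl⟩
  calc (Finset.univ.filter (fun i => t i < n)).card
      ≤ ((Finset.range n).biUnion (fun s => Finset.univ.filter (fun i => t i = s))).card :=
        Finset.card_le_card hsub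
    _ ≤ ∑ s ∈ Finset.range n, (Finset.univ.filter (fun i => t i = s)).card :=
        Finset.card_biUnion_le
    _ ≤ ∑ _s ∈ Finset.range n, p := Finset.sum_le_sum (fun s _ => h s)
    _ = p * n := by simp [Nat.mul_comm]

theorem stmt11 (p : ℕ) (hp : 1 ≤ p) :
    (∀ k : ℕ, 1 ≤ k →
      IsLeast {c : ℕ | ∃ t : (forkTree (p * k)).V → ℕ,
          (forkTree (p * k)).IsSchedule p t ∧ (forkTree (p * k)).makespan t = c}
        (k + 1)) ∧
    Filter.Tendsto (fun k : ℕ => ((p : ℝ) * ((k : ℝ) - 1) + 2) / ((k : ℝ) + 1))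
      Filter.atTop (nhds (p : ℝ)) := by
  have hp0 : 0 < p := hp
  constructor
  · intro k hk
    have hm : p * k = k * p := Nat.mul_comm p k
    set t0 : (forkTree (p * k)).V → ℕ :=
      Sum.elim (fun _ => k) (fun i : Fin (p * k) => (i : ℕ) / p) with ht0
    have ht0l : t0 (Sum.inl ()) = k := rfl
    have ht0r : ∀ i : Fin (p * k), t0 (Sum.inr i) = (i : ℕ) / p := fun _ => rfl
    have hdiv : ∀ i : Fin (p * k), (i : ℕ) / p < k := by
      intro i
      exact (Nat.div_lt_iff_lt_mul hp0).2 (by have := i.isLt; omega)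
    constructor
    · -- the schedule: leaf i at time i/p, root at time k
      refine ⟨t0, ⟨?_, ?_⟩, ?_⟩
      · intro s
        by_cases hs : s = k
        · have hsub : (Finset.univ.filter (fun i => t0 i = s)) ⊆ {Sum.inl ()} := by
            intro x hx
            simp only [Finset.mem_filter, Finset.mem_univ, true_and] at hx
            rcases x with u | i
            · cases u; exact Finset.mem_singleton_self _
            · exfalso
              rw [ht0r] at hx
              have := hdiv i
              omega
          calc _ ≤ ({Sum.inl ()} : Finset (Unit ⊕ Fin (p * k))).card :=
                Finset.card_le_card hsub
            _ ≤ p := by simpa using hp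
        · have hsub : (Finset.univ.filter (fun i => t0 i = s)) ⊆
              (Finset.univ.filter (fun i : Fin (p * k) => (i : ℕ) / p = s)).map
                ⟨Sum.inr, Sum.inr_injective⟩ := by
            intro x hx
            simp only [Finset.mem_filter, Finset.mem_univ, true_and] at hx
            rcases x with u | i
            · cases u
              rw [ht0l] at hx
              exact absurd hx.symm hs
            · exact Finset.mem_map.2 ⟨i, Finset.mem_filter.2 ⟨Finset.mem_univ _, hx⟩, rfl⟩
          have hcard : (Finset.univ.filter (fun i : Fin (p * k) => (i : ℕ) / p = s)).card
              ≤ (Finset.range p).card := by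
            refine Finset.card_le_card_of_injOn (fun i => (i : ℕ) - p * s) ?_ ?_
            · intro i hi
              simp only [Finset.mem_coe, Finset.mem_filter, Finset.mem_univ, true_and] at hi
              have h1 := Nat.div_add_mod (i : ℕ) p
              rw [hi] at h1
              have h2 := Nat.mod_lt (i : ℕ) hp0
              simp only [Finset.coe_range, Set.mem_Iio]
              omega
            · intro i hi j hj hij
              simp only [Finset.coe_filter, Finset.mem_univ, true_and,
                Set.mem_setOf_eq] at hi hj
              have hij' : (i : ℕ) - p * s = (j : ℕ) - p * s := hij
              have h1 := Nat.div_add_mod (i : ℕ) p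
              have h2 := Nat.div_add_mod (j : ℕ) p
              rw [hi] at h1
              rw [hj] at h2
              have : (i : ℕ) = (j : ℕ) := by omega
              exact Fin.ext this
          calc _ ≤ _ := Finset.card_le_card hsub
            _ = (Finset.univ.filter (fun i : Fin (p * k) => (i : ℕ) / p = s)).card :=
              Finset.card_map _
            _ ≤ (Finset.range p).card := hcard
            _ = p := Finset.card_range p
      · rintro (u | i) hi
        · exact absurd rfl hi
        · show t0 (Sum.inr i) + 1 ≤ t0 (Sum.inl ())
          rw [ht0r, ht0l]
          have := hdiv i
          omega
      · apply le_antisymm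
        · apply Finset.sup_le
          rintro (u | i) _
          · simp [ht0l]
          · rw [ht0r]
            have := hdiv i
            omega
        · exact Finset.le_sup (f := fun i => t0 i + 1)
            (Finset.mem_univ (Sum.inl () : Unit ⊕ Fin (p * k)))
    · -- lower bound
      rintro c ⟨t, ⟨hcard, hprec⟩, rfl⟩
      have hleaf : ∀ i : Fin (p * k), t (Sum.inr i) + 1 ≤ t (Sum.inl ()) := by
        intro i
        have := hprec (Sum.inr i) (by simp [forkTree])
        simpa [forkTree] using this
      -- all leaves are started before t root
      have hsub : (Finset.univ.map (⟨Sum.inr, Sum.inr_injective⟩ :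
          Fin (p * k) ↪ (forkTree (p * k)).V)) ⊆
          Finset.univ.filter (fun i => t i < t (Sum.inl ())) := by
        intro x hx
        simp only [Finset.mem_map, Finset.mem_univ, true_and,
          Function.Embedding.coeFn_mk] at hx
        obtain ⟨i, rfl⟩ := hx
        simp only [Finset.mem_filter, Finset.mem_univ, true_and]
        show t (Sum.inr i) < t (Sum.inl ())
        have := hleaf i
        omega
      have h1 : p * k ≤ p * t (Sum.inl ()) := by
        calc p * k = (Finset.univ.map (⟨Sum.inr, Sum.inr_injective⟩ :
              Fin (p * k) ↪ (forkTree (p * k)).V)).card := by simp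
          _ ≤ (Finset.univ.filter (fun i => t i < t (Sum.inl ()))).card :=
            Finset.card_le_card hsub
          _ ≤ p * t (Sum.inl ()) := count_lt _ p t hcard _
      have h2 : k ≤ t (Sum.inl ()) := Nat.le_of_mul_le_mul_left h1 hp0
      have h3 : t (Sum.inl ()) + 1 ≤ (forkTree (p * k)).makespan t :=
        Finset.le_sup (f := fun i => t i + 1) (Finset.mem_univ _)
      omega
  · -- the limit
    have h1 : Filter.Tendsto (fun k : ℕ => ((k : ℝ) + 1)⁻¹) Filter.atTop (nhds 0) :=
      tendsto_inv_atTop_zero.comp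
        (Filter.tendsto_atTop_add_const_right _ 1 tendsto_natCast_atTop_atTop)
    have h2 : Filter.Tendsto (fun k : ℕ => (p : ℝ) + (2 - 2 * p) * ((k : ℝ) + 1)⁻¹)
        Filter.atTop (nhds ((p : ℝ) + (2 - 2 * p) * 0)) :=
      Filter.Tendsto.const_add _ (h1.const_mul _)
    rw [mul_zero, add_zero] at h2
    apply h2.congr
    intro k
    have hk0 : (k : ℝ) + 1 ≠ 0 := by positivity
    field_simp
    ring
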